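/- Existence of flat families of starlike partitions of unity: let Ω ⊆ ℝⁿ be a bounded Lipschitz domain. Then there exist k ∈ ℕ and, for each j ∈ {1,…,k}, a finite family of open sets U₁^{(j)},…,U_{m_j}^{(j)} ⊆ ℝⁿ whose union contains the closure of Ω, such that each U_i^{(j)} ∩ Ω is starlike with respect to some open ball, together with functions χ_i^{(j)} ∈ C_c^∞(ℝⁿ) with supp χ_i^{(j)} ⊆ U_i^{(j)} and Σ_{i=1}^{m_j} χ_i^{(j)}(x) = 1 for all x in some neighborhood of the closure of Ω, with the following property: for every x₀ ∈ ℝⁿ there exists j ∈ {1,…,k} such that every function χ_i^{(j)}, i = 1,…,m_j, is constant on some neighborhood of x₀. -/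

import Mathlib

open MeasureTheory Set Metric
open scoped Manifold

noncomputable section

/-- A bounded Lipschitz domain in `ℝⁿ` (`n = m+1`): a bounded connected open set such that
near every boundary point, after a rigid motion, the domain coincides with the region below
the graph of a Lipschitz function. -/
def IsBddLipschitzDomain {m : ℕ} (Ω : Set (EuclideanSpace ℝ (Fin (m + 1)))) : Prop :=
  IsOpen Ω ∧ IsConnected Ω ∧ Bornology.IsBounded Ω ∧
    ∀ p ∈ frontier Ω, ∃ U : Set (EuclideanSpace ℝ (Fin (m + 1))),
      IsOpen U ∧ p ∈ U ∧
        ∃ (g : EuclideanSpace ℝ (Fin (m + 1)) ≃ᵢ EuclideanSpace ℝ (Fin (m + 1)))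
          (φ : EuclideanSpace ℝ (Fin m) → ℝ) (L : NNReal),
          LipschitzWith L φ ∧
            g '' (U ∩ Ω) =
              (g '' U) ∩ {x : EuclideanSpace ℝ (Fin (m + 1)) |
                x (Fin.last m) < φ (WithLp.toLp 2 (fun i => x (Fin.castSucc i)))}

section Aux

variable {m : ℕ}

abbrev Eu (n : ℕ) := EuclideanSpace ℝ (Fin n)

def pr (x : Eu (m+1)) : Eu m := WithLp.toLp 2 (fun i : Fin m => x i.castSucc)

lemma dist_pr_le (x y : Eu (m+1)) : dist (pr x) (pr y) ≤ dist x y := by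
  rw [EuclideanSpace.dist_eq, EuclideanSpace.dist_eq]
  apply Real.sqrt_le_sqrt
  rw [Fin.sum_univ_castSucc]
  have : (0:ℝ) ≤ (dist (x (Fin.last m)) (y (Fin.last m)))^2 := sq_nonneg _
  simp only [pr, PiLp.toLp_apply]
  nlinarith [this]

lemma dist_last_le (x y : Eu (m+1)) : |x (Fin.last m) - y (Fin.last m)| ≤ dist x y := by
  rw [EuclideanSpace.dist_eq]
  rw [← Real.sqrt_sq_eq_abs]
  apply Real.sqrt_le_sqrt
  rw [Fin.sum_univ_castSucc]
  have : (0:ℝ) ≤ ∑ i : Fin m, dist (x i.castSucc) (y i.castSucc)^2 :=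
    Finset.sum_nonneg fun i _ => sq_nonneg _
  rw [Real.dist_eq, sq_abs]
  linarith [this]

lemma combo_lt {a b u v c : ℝ} (ha : 0 ≤ a) (hb : 0 ≤ b) (hab : a + b = 1)
    (hu : u < c) (hv : v < c) : a*u + b*v < c := by
  rcases eq_or_lt_of_le ha with h|h
  · rw [← h] at hab ⊢; simp at hab; simp [hab, hu, hv]
  · have habc : a*c + b*c = c := by linear_combination c * hab
    linarith [mul_lt_mul_of_pos_left hu h, mul_le_mul_of_nonneg_left hv.le hb]

/-- The cylinder around `q` of radius ρ horizontally and `(4L+4)ρ` vertically. -/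
def cylZ (q : Eu (m+1)) (ρ lr : ℝ) : Set (Eu (m+1)) :=
  {x | ‖pr x - pr q‖ < ρ ∧ |x (Fin.last m) - q (Fin.last m)| < (4*lr+4)*ρ}

/-- The center of the star ball. -/
def starC (q : Eu (m+1)) (ρ lr : ℝ) : Eu (m+1) :=
  q - ((3*lr+2)*ρ) • EuclideanSpace.single (Fin.last m) (1:ℝ)

lemma pr_starC (q : Eu (m+1)) (ρ lr : ℝ) : pr (starC q ρ lr) = pr q := by
  ext i
  simp [pr, starC, EuclideanSpace.single_apply, (Fin.castSucc_lt_last i).ne]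

lemma starC_last (q : Eu (m+1)) (ρ lr : ℝ) :
    (starC q ρ lr) (Fin.last m) = q (Fin.last m) - (3*lr+2)*ρ := by
  simp [starC, EuclideanSpace.single_apply]

lemma pr_combo (a b : ℝ) (x y : Eu (m+1)) :
    pr (a • x + b • y) = a • pr x + b • pr y := by
  ext i
  simp [pr]

lemma last_combo (a b : ℝ) (x y : Eu (m+1)) :
    (a • x + b • y) (Fin.last m) = a * x (Fin.last m) + b * y (Fin.last m) := by
  simp

lemma star_main {φ : Eu m → ℝ} {L : NNReal} (hφ : LipschitzWith L φ)
    {q : Eu (m+1)} (hq : q (Fin.last m) ≤ φ (pr q)) {ρ : ℝ} (hρ : 0 < ρ)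
    {x : Eu (m+1)} (hx : x ∈ cylZ q ρ (L:ℝ)) (hxS : x (Fin.last m) < φ (pr x))
    {y : Eu (m+1)} (hy : y ∈ ball (starC q ρ (L:ℝ)) ρ)
    {z : Eu (m+1)} (hz : z ∈ segment ℝ x y) :
    z ∈ cylZ q ρ (L:ℝ) ∧ z (Fin.last m) < φ (pr z) := by
  set lr : ℝ := (L:ℝ) with hlr
  have hL0 : 0 ≤ lr := L.2
  obtain ⟨a, b, ha, hb, hab, rfl⟩ := hz
  have hyd : dist y (starC q ρ lr) < ρ := mem_ball.1 hy
  have h1 : ‖pr y - pr q‖ < ρ := by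
    have := dist_pr_le y (starC q ρ lr)
    rw [pr_starC] at this
    rw [← dist_eq_norm]
    exact lt_of_le_of_lt this hyd
  have h2 : |y (Fin.last m) - (q (Fin.last m) - (3*lr+2)*ρ)| < ρ := by
    have := dist_last_le y (starC q ρ lr)
    rw [starC_last] at this
    exact lt_of_le_of_lt this hyd
  obtain ⟨hx1, hx2⟩ := hx
  set xn := x (Fin.last m) with hxn
  set yn := y (Fin.last m) with hyn
  set qn := q (Fin.last m) with hqn
  -- horizontal bound
  have goal1 : ‖pr (a • x + b • y) - pr q‖ < ρ := by
    have e : pr (a • x + b • y) - pr q = a • (pr x - pr q) + b • (pr y - pr q) := by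
      rw [pr_combo, show a • (pr x - pr q) + b • (pr y - pr q)
          = a • pr x + b • pr y - (a + b) • pr q by module, hab, one_smul]
    rw [e]
    calc ‖a • (pr x - pr q) + b • (pr y - pr q)‖
        ≤ a * ‖pr x - pr q‖ + b * ‖pr y - pr q‖ := by
          refine (norm_add_le _ _).trans ?_
          rw [norm_smul, norm_smul, Real.norm_of_nonneg ha, Real.norm_of_nonneg hb]
      _ < ρ := combo_lt ha hb hab hx1 h1
  -- vertical bound on y
  have hy2 : |yn - qn| < (4*lr+4)*ρ := by
    have tri : |yn - qn| ≤ |yn - (qn - (3*lr+2)*ρ)| + |(qn - (3*lr+2)*ρ) - qn| :=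
      abs_sub_le _ _ _
    have : |(qn - (3*lr+2)*ρ) - qn| = (3*lr+2)*ρ := by
      rw [show (qn - (3*lr+2)*ρ) - qn = -((3*lr+2)*ρ) by ring, abs_neg,
        abs_of_nonneg (by positivity)]
    rw [this] at tri
    nlinarith [h2]
  -- vertical bound on z
  have goal2 : |(a • x + b • y) (Fin.last m) - qn| < (4*lr+4)*ρ := by
    have e : (a • x + b • y) (Fin.last m) - qn = a*(xn - qn) + b*(yn - qn) := by
      rw [last_combo]
      linear_combination qn * hab
    rw [e]
    calc |a*(xn - qn) + b*(yn - qn)| ≤ a*|xn - qn| + b*|yn - qn| := by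
          refine (abs_add_le _ _).trans ?_
          rw [abs_mul, abs_mul, abs_of_nonneg ha, abs_of_nonneg hb]
      _ < (4*lr+4)*ρ := combo_lt ha hb hab hx2 hy2
  refine ⟨⟨goal1, goal2⟩, ?_⟩
  -- below the graph
  rcases eq_or_lt_of_le hb with hb0|hbpos
  · have hz : a • x + b • y = x := by
      rw [← hb0] at hab ⊢
      simp at hab
      simp [hab]
    rw [hz]; exact hxS
  · -- Lipschitz estimates
    have lip1 : φ (pr q) - φ (pr x) ≤ lr * ‖pr q - pr x‖ := by
      have := hφ.dist_le_mul (pr q) (pr x)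
      rw [Real.dist_eq, dist_eq_norm] at this
      exact (le_abs_self _).trans this
    have lip2 : φ (pr x) - φ (pr (a • x + b • y)) ≤ lr * ‖pr x - pr (a • x + b • y)‖ := by
      have := hφ.dist_le_mul (pr x) (pr (a • x + b • y))
      rw [Real.dist_eq, dist_eq_norm] at this
      exact (le_abs_self _).trans this
    have eprz : pr x - pr (a • x + b • y) = b • (pr x - pr y) := by
      rw [pr_combo, show a • pr x + b • pr y = (a+b) • pr x - b • (pr x - pr y) by module,
        hab, one_smul]
      abel
    have nprz : ‖pr x - pr (a • x + b • y)‖ = b * ‖pr x - pr y‖ := by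
      rw [eprz, norm_smul, Real.norm_of_nonneg hb]
    have nyx : ‖pr x - pr y‖ ≤ 2*ρ := by
      have tri : ‖pr x - pr y‖ ≤ ‖pr x - pr q‖ + ‖pr q - pr y‖ := norm_sub_le_norm_sub_add_norm_sub _ _ _
      have : ‖pr q - pr y‖ = ‖pr y - pr q‖ := norm_sub_rev _ _
      rw [this] at tri
      linarith
    have hqx : ‖pr q - pr x‖ = ‖pr x - pr q‖ := norm_sub_rev _ _
    have hyn' : yn < qn - (3*lr+1)*ρ := by
      have := (abs_lt.1 h2).2
      linarith
    have hφx : φ (pr x) ≥ qn - lr*ρ - lr*ρ + lr*ρ := by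
      have h3 : lr * ‖pr q - pr x‖ ≤ lr * ρ := by
        rw [hqx]
        exact mul_le_mul_of_nonneg_left hx1.le hL0
      linarith [lip1, hq]
    have hφz : φ (pr (a • x + b • y)) ≥ φ (pr x) - lr * (b * ‖pr x - pr y‖) := by
      rw [← nprz]; linarith [lip2]
    have key1 : a * xn ≤ a * φ (pr x) := mul_le_mul_of_nonneg_left hxS.le ha
    have key2 : b * yn < b * (φ (pr x) - (2*lr+1)*ρ) := by
      apply mul_lt_mul_of_pos_left _ hbpos
      have : φ (pr x) ≥ qn - lr*ρ := by linarith [hφx]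
      linarith [hyn']
    have key3 : lr * (b * ‖pr x - pr y‖) ≤ lr * (b * (2*ρ)) := by
      apply mul_le_mul_of_nonneg_left _ hL0
      exact mul_le_mul_of_nonneg_left nyx hb
    have habφ : a * φ (pr x) + b * φ (pr x) = φ (pr x) := by
      linear_combination φ (pr x) * hab
    rw [last_combo, ← hxn, ← hyn]
    nlinarith [key1, key2, key3, hφz, mul_pos hbpos hρ, habφ]

lemma lip_last : LipschitzWith 1 (fun x : Eu (m+1) => x (Fin.last m)) := by
  apply LipschitzWith.of_dist_le_mul
  intro x y
  rw [Real.dist_eq, NNReal.coe_one, one_mul]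
  exact dist_last_le x y

lemma lip_pr : LipschitzWith 1 (pr (m := m)) := by
  apply LipschitzWith.of_dist_le_mul
  intro x y
  rw [NNReal.coe_one, one_mul]
  exact dist_pr_le x y

lemma dist_le_pr_add_last (x y : Eu (m+1)) :
    dist x y ≤ dist (pr x) (pr y) + |x (Fin.last m) - y (Fin.last m)| := by
  rw [EuclideanSpace.dist_eq, EuclideanSpace.dist_eq]
  have h1 : (0:ℝ) ≤ Real.sqrt (∑ i, dist (pr x i) (pr y i)^2) := Real.sqrt_nonneg _
  have h2 : (0:ℝ) ≤ |x (Fin.last m) - y (Fin.last m)| := abs_nonneg _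
  rw [← Real.sqrt_sq (by positivity : (0:ℝ) ≤ Real.sqrt (∑ i, dist (pr x i) (pr y i)^2) + |x (Fin.last m) - y (Fin.last m)|)]
  apply Real.sqrt_le_sqrt
  rw [Fin.sum_univ_castSucc]
  have e1 : Real.sqrt (∑ i, dist (pr x i) (pr y i)^2)^2 = ∑ i, dist (pr x i) (pr y i)^2 :=
    Real.sq_sqrt (Finset.sum_nonneg fun i _ => sq_nonneg _)
  have e2 : dist (x (Fin.last m)) (y (Fin.last m))^2 = |x (Fin.last m) - y (Fin.last m)|^2 := by
    rw [Real.dist_eq]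
  have : ∀ i : Fin m, dist (x i.castSucc) (y i.castSucc) = dist (pr x i) (pr y i) := fun i => rfl
  simp only [this]
  nlinarith [mul_nonneg h1 h2, e1, e2]

lemma exists_star_nbhd {Ω : Set (Eu (m+1))} (hΩ : IsBddLipschitzDomain Ω) :
    ∀ p ∈ closure Ω, ∃ W : Set (Eu (m+1)), IsOpen W ∧ p ∈ W ∧ Bornology.IsBounded W ∧
      ∃ c r, 0 < r ∧ ∀ x ∈ W ∩ Ω, convexHull ℝ ({x} ∪ ball c r) ⊆ W ∩ Ω := by
  obtain ⟨hopen, hconn, hbdd, hbdry⟩ := hΩ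
  intro p hp
  by_cases hpΩ : p ∈ Ω
  · -- interior point
    obtain ⟨r, hr, hball⟩ := Metric.isOpen_iff.1 hopen p hpΩ
    refine ⟨ball p r, isOpen_ball, mem_ball_self hr, isBounded_ball, p, r/2, by linarith, ?_⟩
    intro x hx
    have : ball p r ∩ Ω = ball p r := inter_eq_left.2 hball
    rw [this] at hx ⊢
    apply convexHull_min _ (convex_ball p r)
    rintro z (rfl | hz)
    · exact hx
    · exact ball_subset_ball (by linarith) hz
  · -- boundary point
    have hpf : p ∈ frontier Ω := by
      rw [frontier, hopen.interior_eq]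
      exact ⟨hp, hpΩ⟩
    obtain ⟨U, hU, hpU, g, φ, L, hφ, himg⟩ := hbdry p hpf
    set lr : ℝ := (L : ℝ) with hlr
    have hL0 : (0:ℝ) ≤ lr := L.2
    set q := g p with hqdef
    set S : Set (Eu (m+1)) := {x | x (Fin.last m) < φ (pr x)} with hSdef
    have himg' : g '' (U ∩ Ω) = (g '' U) ∩ S := himg
    have hgU : IsOpen (g '' U) := g.toHomeomorph.isOpen_image.2 hU
    obtain ⟨ρ₀, hρ₀, hball₀⟩ := Metric.isOpen_iff.1 hgU q ⟨p, hpU, rfl⟩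
    set ρ : ℝ := ρ₀ / (4*lr + 6) with hρdef
    have hρ : 0 < ρ := by
      apply div_pos hρ₀; linarith
    have hcyl_sub : cylZ q ρ lr ⊆ ball q ρ₀ := by
      intro x hx
      obtain ⟨h1, h2⟩ := hx
      rw [mem_ball]
      calc dist x q ≤ dist (pr x) (pr q) + |x (Fin.last m) - q (Fin.last m)| :=
            dist_le_pr_add_last x q
        _ < ρ + (4*lr+4)*ρ := by
            rw [dist_eq_norm]; exact add_lt_add h1 h2
        _ ≤ ρ₀ := by
            have e : (4*lr+6) * ρ = ρ₀ := by
              rw [hρdef]; field_simp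
            nlinarith [hρ, hL0, e]
    -- q is on or below the graph
    have hq : q (Fin.last m) ≤ φ (pr q) := by
      have h1 : p ∈ closure (U ∩ Ω) := hU.inter_closure ⟨hpU, hp⟩
      have h2 : q ∈ closure (g '' (U ∩ Ω)) :=
        (image_closure_subset_closure_image g.continuous) ⟨p, h1, rfl⟩
      rw [himg'] at h2
      have h3 : closure ((g '' U) ∩ S) ⊆ {x : Eu (m+1) | x (Fin.last m) ≤ φ (pr x)} := by
        have hcl : IsClosed {x : Eu (m+1) | x (Fin.last m) ≤ φ (pr x)} :=
          isClosed_le lip_last.continuous (hφ.continuous.comp lip_pr.continuous)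
        exact closure_minimal (fun x hx => show x (Fin.last m) ≤ φ (pr x) from le_of_lt hx.2) hcl
      exact h3 h2
    set W : Set (Eu (m+1)) := U ∩ g ⁻¹' (cylZ q ρ lr) with hWdef
    have hWopen : IsOpen W := by
      apply hU.inter
      apply IsOpen.preimage g.continuous
      have : IsOpen {x : Eu (m+1) | ‖pr x - pr q‖ < ρ} := by
        have : Continuous fun x : Eu (m+1) => ‖pr x - pr q‖ :=
          (lip_pr.continuous.sub continuous_const).norm
        exact isOpen_lt this continuous_const
      apply this.inter
      have : Continuous fun x : Eu (m+1) => |x (Fin.last m) - q (Fin.last m)| :=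
        (((lip_last (m := m)).continuous).sub continuous_const).abs
      exact isOpen_lt this continuous_const
    have hpW : p ∈ W := by
      refine ⟨hpU, ?_⟩
      simp only [mem_preimage]
      constructor
      · show ‖pr q - pr q‖ < ρ
        simp [sub_self, hρ]
      · show |q (Fin.last m) - q (Fin.last m)| < (4*lr+4)*ρ
        simp only [sub_self, abs_zero]
        positivity
    have hWbdd : Bornology.IsBounded W := by
      have h1 : W ⊆ g ⁻¹' (ball q ρ₀) := fun x hx => hcyl_sub hx.2
      have h2 : g ⁻¹' (ball q ρ₀) = g.symm '' (ball q ρ₀) := by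
        rw [← IsometryEquiv.image_symm]
      exact (Bornology.IsBounded.subset (by
        rw [h2, g.symm.image_ball]
        exact isBounded_ball) h1)
    -- membership characterization
    have hmem : ∀ x : Eu (m+1), x ∈ W ∩ Ω ↔ g x ∈ cylZ q ρ lr ∩ S := by
      intro x
      constructor
      · rintro ⟨⟨hxU, hxcyl⟩, hxΩ⟩
        refine ⟨hxcyl, ?_⟩
        have : g x ∈ g '' (U ∩ Ω) := ⟨x, ⟨hxU, hxΩ⟩, rfl⟩
        rw [himg'] at this
        exact this.2
      · rintro ⟨hxcyl, hxS⟩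
        have hgxU : g x ∈ g '' U := hball₀ (hcyl_sub hxcyl)
        obtain ⟨u, huU, hu⟩ := hgxU
        have : u = x := g.injective hu
        subst this
        have : g u ∈ g '' (U ∩ Ω) := by rw [himg']; exact ⟨⟨u, huU, rfl⟩, hxS⟩
        obtain ⟨v, hv, hveq⟩ := this
        have : v = u := g.injective hveq
        subst this
        exact ⟨⟨huU, hxcyl⟩, hv.2⟩
    refine ⟨W, hWopen, hpW, hWbdd, g.symm (starC q ρ lr), ρ, hρ, ?_⟩
    intro x hx
    intro z hz
    -- transport through g
    have himgconv : g '' (convexHull ℝ ({x} ∪ ball (g.symm (starC q ρ lr)) ρ)) =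
        convexHull ℝ ({g x} ∪ ball (starC q ρ lr) ρ) := by
      have e1 : ⇑(g.toRealAffineIsometryEquiv.toAffineEquiv.toAffineMap) = ⇑g := rfl
      have h := AffineMap.image_convexHull (g.toRealAffineIsometryEquiv.toAffineEquiv.toAffineMap)
        ({x} ∪ ball (g.symm (starC q ρ lr)) ρ)
      rw [e1] at h
      rw [h, image_union, image_singleton, g.image_ball, g.apply_symm_apply]
    have hgz : g z ∈ convexHull ℝ ({g x} ∪ ball (starC q ρ lr) ρ) := by
      rw [← himgconv]; exact ⟨z, hz, rfl⟩
    rw [Set.singleton_union, convexHull_insert (nonempty_ball.2 hρ),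
      (convex_ball _ _).convexHull_eq] at hgz
    rw [mem_convexJoin] at hgz
    obtain ⟨a, ha, y, hy, hseg⟩ := hgz
    rw [mem_singleton_iff] at ha
    subst ha
    have hxmem := (hmem x).1 hx
    have := star_main hφ hq hρ hxmem.1 hxmem.2 hy hseg
    exact (hmem z).2 ⟨this.1, this.2⟩
lemma tele_sum (b : ℕ → ℝ) (n : ℕ) :
    ∑ i ∈ Finset.range n, b i * ∏ l ∈ Finset.range i, (1 - b l)
      = 1 - ∏ i ∈ Finset.range n, (1 - b i) := by
  induction n with
  | zero => simp
  | succ n ih =>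
    rw [Finset.sum_range_succ, Finset.prod_range_succ, ih]
    ring


variable {E : Type*} [NormedAddCommGroup E] [NormedSpace ℝ E]

lemma partition_pack {N : ℕ} (gf : Fin N → E → ℝ)
    (hsmooth : ∀ i, ContDiff ℝ (⊤:ℕ∞) (gf i)) :
    ∃ χf : Fin (N+1) → Fin N → E → ℝ,
      (∀ j i, ContDiff ℝ (⊤:ℕ∞) (χf j i)) ∧
      (∀ j i, tsupport (χf j i) ⊆ tsupport (gf i)) ∧
      (∀ j (x : E), (∃ i, gf i x = 1) → ∑ i, χf j i x = 1) ∧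
      (∀ x₀ : E, ∃ j : Fin (N+1), ∀ i : Fin N, ∃ c : ℝ, ∀ᶠ x in nhds x₀, χf j i x = c) := by
  classical
  have hN2 : (0:ℝ) < (N:ℝ) + 2 := by positivity
  set lev : Fin (N+1) → ℝ := fun j => ((j.val:ℝ)+1)/((N:ℝ)+2) with hlev
  set ε : ℝ := 1/(4*((N:ℝ)+2)) with hε
  have hεpos : 0 < ε := by rw [hε]; positivity
  have heps_lt_lev : ∀ j : Fin (N+1), ε < lev j := by
    intro j
    rw [hε, hlev, div_lt_div_iff₀ (by positivity) hN2]
    have := j.val.cast_nonneg (α := ℝ)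
    nlinarith
  have hlev_add_eps_lt_one : ∀ j : Fin (N+1), lev j + ε < 1 := by
    intro j
    have hj : (j.val : ℝ) ≤ (N:ℝ) := by
      have := Nat.lt_succ_iff.1 j.isLt
      exact_mod_cast this
    rw [hε, hlev, div_add_div _ _ (ne_of_gt hN2) (by positivity), div_lt_one (by positivity)]
    nlinarith
  have hsep : ∀ j j' : Fin (N+1), j ≠ j' → 4*ε ≤ |lev j - lev j'| := by
    intro j j' hne
    have hvalne : j.val ≠ j'.val := fun h => hne (Fin.ext h)
    have h1 : (1:ℝ) ≤ |(j.val:ℝ) - (j'.val:ℝ)| := by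
      rcases lt_or_gt_of_ne hvalne with h | h
      · rw [abs_sub_comm, abs_of_nonneg (by
          have : (j.val:ℝ) ≤ (j'.val:ℝ) := by exact_mod_cast h.le
          linarith)]
        have : ((j.val+1 : ℕ):ℝ) ≤ ((j'.val : ℕ):ℝ) := by exact_mod_cast Nat.succ_le_of_lt h
        push_cast at this
        linarith
      · rw [abs_of_nonneg (by
          have : (j'.val:ℝ) ≤ (j.val:ℝ) := by exact_mod_cast h.le
          linarith)]
        have : ((j'.val+1 : ℕ):ℝ) ≤ ((j.val : ℕ):ℝ) := by exact_mod_cast Nat.succ_le_of_lt h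
        push_cast at this
        linarith
    have e : lev j - lev j' = ((j.val:ℝ) - (j'.val:ℝ))/((N:ℝ)+2) := by
      rw [hlev]; ring
    rw [e, abs_div, abs_of_pos hN2, hε, le_div_iff₀ hN2]
    calc 4 * (1/(4*((N:ℝ)+2))) * ((N:ℝ)+2) = 1 := by field_simp
      _ ≤ |(j.val:ℝ) - (j'.val:ℝ)| := h1
  set bb : Fin (N+1) → ℕ → E → ℝ := fun j l x =>
    if h : l < N then Real.smoothTransition ((gf ⟨l, h⟩ x - lev j + ε)/(2*ε)) else 0
    with hbb
  set χf : Fin (N+1) → Fin N → E → ℝ := fun j i x =>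
    bb j i.val x * ∏ l ∈ Finset.range i.val, (1 - bb j l x) with hχf
  have hbb_smooth : ∀ j l, ContDiff ℝ (⊤:ℕ∞) (fun x => bb j l x) := by
    intro j l
    by_cases h : l < N
    · simp only [hbb, dif_pos h]
      exact Real.smoothTransition.contDiff.comp
        ((((hsmooth ⟨l,h⟩).sub contDiff_const).add contDiff_const).div_const _)
    · simp only [hbb, dif_neg h]
      exact contDiff_const
  have hbb_eq : ∀ (j : Fin (N+1)) (i : Fin N) (x : E),
      bb j i.val x = Real.smoothTransition ((gf i x - lev j + ε)/(2*ε)) := by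
    intro j i x
    simp only [hbb, dif_pos i.isLt]
  have hbb_supp : ∀ (j : Fin (N+1)) (i : Fin N) (x : E), gf i x = 0 → bb j i.val x = 0 := by
    intro j i x hx
    rw [hbb_eq, hx]
    apply Real.smoothTransition.zero_of_nonpos
    apply div_nonpos_of_nonpos_of_nonneg _ (by positivity)
    have := heps_lt_lev j
    linarith
  have hbb_one : ∀ (j : Fin (N+1)) (i : Fin N) (x : E), gf i x = 1 → bb j i.val x = 1 := by
    intro j i x hx
    rw [hbb_eq, hx]
    apply Real.smoothTransition.one_of_one_le
    rw [le_div_iff₀ (by positivity)]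
    have := hlev_add_eps_lt_one j
    linarith
  have hprod_smooth : ∀ (j : Fin (N+1)) (s : Finset ℕ),
      ContDiff ℝ (⊤:ℕ∞) (fun x : E => ∏ l ∈ s, (1 - bb j l x)) := by
    intro j s
    induction s using Finset.induction with
    | empty => simpa using contDiff_const
    | @insert a s' hnotmem ih =>
      have : (fun x : E => ∏ l ∈ insert a s', (1 - bb j l x))
          = fun x => (1 - bb j a x) * ∏ l ∈ s', (1 - bb j l x) := by
        funext x
        rw [Finset.prod_insert hnotmem]
      rw [this]
      exact (contDiff_const.sub (hbb_smooth j a)).mul ih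
  refine ⟨χf, fun j i => (hbb_smooth j i.val).mul (hprod_smooth j _), ?_, ?_, ?_⟩
  · intro j i
    apply closure_mono
    intro x hx
    simp only [hχf, Function.mem_support] at hx
    intro hgf0
    exact hx (by rw [hbb_supp j i x hgf0, zero_mul])
  · intro j x hx
    obtain ⟨i₀, hi₀⟩ := hx
    have hsum : ∑ i : Fin N, χf j i x
        = ∑ n ∈ Finset.range N, (bb j n x * ∏ l ∈ Finset.range n, (1 - bb j l x)) :=
      Fin.sum_univ_eq_sum_range (fun n => bb j n x * ∏ l ∈ Finset.range n, (1 - bb j l x)) N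
    rw [hsum, tele_sum (fun n => bb j n x) N]
    have hzero : ∏ i ∈ Finset.range N, (1 - bb j i x) = 0 := by
      apply Finset.prod_eq_zero (Finset.mem_range.2 i₀.isLt)
      rw [hbb_one j i₀ x hi₀]
      ring
    rw [hzero]
    ring
  · intro x₀
    set Bad : Finset (Fin (N+1)) :=
      Finset.univ.filter (fun j => ∃ i : Fin N, |gf i x₀ - lev j| ≤ ε) with hBad
    have hcard : Bad.card ≤ N := by
      have hsub : Bad ⊆ Finset.univ.biUnion
          (fun i : Fin N => Finset.univ.filter (fun j : Fin (N+1) => |gf i x₀ - lev j| ≤ ε)) := by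
        intro j hj
        rw [hBad, Finset.mem_filter] at hj
        obtain ⟨-, i, hi⟩ := hj
        exact Finset.mem_biUnion.2 ⟨i, Finset.mem_univ i, Finset.mem_filter.2 ⟨Finset.mem_univ j, hi⟩⟩
      calc Bad.card ≤ _ := Finset.card_le_card hsub
        _ ≤ ∑ i : Fin N, (Finset.univ.filter (fun j : Fin (N+1) => |gf i x₀ - lev j| ≤ ε)).card :=
          Finset.card_biUnion_le
        _ ≤ ∑ _i : Fin N, 1 := by
          apply Finset.sum_le_sum
          intro i _
          apply Finset.card_le_one.2
          intro j hj j' hj'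
          rw [Finset.mem_filter] at hj hj'
          by_contra hne
          have h4 := hsep j j' hne
          have habs : |lev j - lev j'| ≤ 2*ε := by
            have e : lev j - lev j' = (gf i x₀ - lev j') - (gf i x₀ - lev j) := by ring
            rw [e]
            calc |(gf i x₀ - lev j') - (gf i x₀ - lev j)|
                ≤ |gf i x₀ - lev j'| + |gf i x₀ - lev j| := abs_sub _ _
              _ ≤ 2*ε := by linarith [hj.2, hj'.2]
          linarith
        _ = N := by simp
    have hexists : ∃ j : Fin (N+1), j ∉ Bad := by
      by_contra h
      push_neg at h
      have : (Finset.univ : Finset (Fin (N+1))).card ≤ Bad.card :=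
        Finset.card_le_card (fun j _ => h j)
      rw [Finset.card_univ, Fintype.card_fin] at this
      omega
    obtain ⟨j, hj⟩ := hexists
    have hfar : ∀ i : Fin N, ε < |gf i x₀ - lev j| := by
      intro i
      by_contra h
      push_neg at h
      exact hj (by rw [hBad, Finset.mem_filter]; exact ⟨Finset.mem_univ j, i, h⟩)
    have hconst : ∀ l : ℕ, ∃ c : ℝ, ∀ᶠ x in nhds x₀, bb j l x = c := by
      intro l
      by_cases h : l < N
      · rcases lt_abs.1 (hfar ⟨l, h⟩) with hhi | hlo
        · refine ⟨1, ?_⟩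
          have hopen : IsOpen {x : E | lev j + ε < gf ⟨l, h⟩ x} :=
            isOpen_lt continuous_const (hsmooth ⟨l, h⟩).continuous
          have hx₀ : x₀ ∈ {x : E | lev j + ε < gf ⟨l, h⟩ x} := by
            show lev j + ε < gf ⟨l, h⟩ x₀
            linarith
          filter_upwards [hopen.mem_nhds hx₀] with x hx
          have hx' : lev j + ε < gf ⟨l, h⟩ x := hx
          show bb j l x = 1
          rw [show l = (⟨l, h⟩ : Fin N).val from rfl, hbb_eq]
          apply Real.smoothTransition.one_of_one_le
          rw [le_div_iff₀ (by positivity)]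
          linarith
        · refine ⟨0, ?_⟩
          have hopen : IsOpen {x : E | gf ⟨l, h⟩ x < lev j - ε} :=
            isOpen_lt (hsmooth ⟨l, h⟩).continuous continuous_const
          have hx₀ : x₀ ∈ {x : E | gf ⟨l, h⟩ x < lev j - ε} := by
            show gf ⟨l, h⟩ x₀ < lev j - ε
            linarith
          filter_upwards [hopen.mem_nhds hx₀] with x hx
          have hx' : gf ⟨l, h⟩ x < lev j - ε := hx
          show bb j l x = 0
          rw [show l = (⟨l, h⟩ : Fin N).val from rfl, hbb_eq]
          apply Real.smoothTransition.zero_of_nonpos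
          apply div_nonpos_of_nonpos_of_nonneg _ (by positivity)
          linarith
      · exact ⟨0, Filter.Eventually.of_forall (fun x => by simp only [hbb, dif_neg h])⟩
    choose cc hcc using hconst
    refine ⟨j, fun i => ⟨cc i.val * ∏ l ∈ Finset.range i.val, (1 - cc l), ?_⟩⟩
    have hev : ∀ᶠ x in nhds x₀, ∀ l ∈ Finset.range (i.val+1), bb j l x = cc l :=
      (Filter.eventually_all_finset _).2 (fun l _ => hcc l)
    filter_upwards [hev] with x hx
    show bb j i.val x * ∏ l ∈ Finset.range i.val, (1 - bb j l x)
        = cc i.val * ∏ l ∈ Finset.range i.val, (1 - cc l)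
    rw [hx i.val (Finset.mem_range.2 (Nat.lt_succ_self _))]
    congr 1
    apply Finset.prod_congr rfl
    intro l hl
    rw [hx l (Finset.mem_range.2 (Nat.lt_succ_of_lt (Finset.mem_range.1 hl)))]
end Aux

theorem stmt17 {m : ℕ} (Ω : Set (EuclideanSpace ℝ (Fin (m + 1))))
    (hΩ : IsBddLipschitzDomain Ω) :
    ∃ (k : ℕ) (mj : Fin k → ℕ)
      (U : (j : Fin k) → Fin (mj j) → Set (EuclideanSpace ℝ (Fin (m + 1))))
      (χ : (j : Fin k) → Fin (mj j) → EuclideanSpace ℝ (Fin (m + 1)) → ℝ),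
      -- open coverings of the closure of Ω
      (∀ j i, IsOpen (U j i)) ∧
      (∀ j, closure Ω ⊆ ⋃ i, U j i) ∧
      -- each U_i^(j) ∩ Ω is starlike with respect to some open ball
      (∀ j i, ∃ (c : EuclideanSpace ℝ (Fin (m + 1))) (r : ℝ), 0 < r ∧
        ∀ x ∈ U j i ∩ Ω, convexHull ℝ ({x} ∪ Metric.ball c r) ⊆ U j i ∩ Ω) ∧
      -- subordinate smooth partitions of unity
      (∀ j i, ContDiff ℝ (⊤ : ℕ∞) (χ j i) ∧ HasCompactSupport (χ j i) ∧
        tsupport (χ j i) ⊆ U j i) ∧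
      (∀ j, ∃ V : Set (EuclideanSpace ℝ (Fin (m + 1))), IsOpen V ∧ closure Ω ⊆ V ∧
        ∀ x ∈ V, (∑ i, χ j i x) = 1) ∧
      -- flatness: near every point, one of the partitions of unity is locally constant
      (∀ x₀ : EuclideanSpace ℝ (Fin (m + 1)), ∃ j : Fin k, ∀ i : Fin (mj j),
        ∃ c : ℝ, ∀ᶠ x in nhds x₀, χ j i x = c) := by
  classical
  -- choose starlike neighborhoods of every point of the closure
  choose! W hWopen hWmem hWbdd hWstar using exists_star_nbhd hΩ
  -- compactness of the closure
  have hcomp : IsCompact (closure Ω) :=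
    Metric.isCompact_of_isClosed_isBounded isClosed_closure hΩ.2.2.1.closure
  have hcover : closure Ω ⊆ ⋃ p : closure Ω, W p := by
    intro x hx
    exact mem_iUnion.2 ⟨⟨x, hx⟩, hWmem x hx⟩
  obtain ⟨t, ht⟩ := hcomp.elim_finite_subcover (fun p : closure Ω => W p)
    (fun p => hWopen p p.2) hcover
  set N : ℕ := t.card with hN
  set e := t.equivFin with he
  set Wf : Fin N → Set (Eu (m+1)) := fun i => W ((e.symm i : {x // x ∈ t}) : closure Ω) with hWf
  have hWfopen : ∀ i, IsOpen (Wf i) := fun i => hWopen _ (e.symm i).1.2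
  have hWfbdd : ∀ i, Bornology.IsBounded (Wf i) := fun i => hWbdd _ (e.symm i).1.2
  have hWfstar : ∀ i, ∃ c r, 0 < r ∧
      ∀ x ∈ Wf i ∩ Ω, convexHull ℝ ({x} ∪ ball c r) ⊆ Wf i ∩ Ω := by
    intro i
    obtain ⟨c, r, hr, hs⟩ := hWstar _ (e.symm i).1.2
    exact ⟨c, r, hr, hs⟩
  have hWfcover : closure Ω ⊆ ⋃ i, Wf i := by
    intro x hx
    have := ht hx
    rw [mem_iUnion₂] at this
    obtain ⟨p, hpt, hpx⟩ := this
    exact mem_iUnion.2 ⟨e ⟨p, hpt⟩, by simpa [hWf] using hpx⟩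
  -- shrink the cover
  obtain ⟨v, hvcover, hvopen, hvsub⟩ := exists_subset_iUnion_closure_subset isClosed_closure
    hWfopen (fun x _ => Set.toFinite _) hWfcover
  -- smooth bump functions
  have hbump : ∀ i : Fin N, ∃ gf : Eu (m+1) → ℝ, ContDiff ℝ (⊤:ℕ∞) gf ∧
      tsupport gf ⊆ Wf i ∧ HasCompactSupport gf ∧ (∀ x, gf x ∈ Icc (0:ℝ) 1) ∧
      (∀ x ∈ v i, gf x = 1) := by
    intro i
    obtain ⟨O, hOopen, hvO, hcOsub⟩ := normal_exists_closure_subset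
      isClosed_closure (hWfopen i) (hvsub i)
    have hdisj : Disjoint Oᶜ (closure (v i)) := by
      rw [Set.disjoint_left]
      intro a ha hmem
      exact ha (hvO hmem)
    obtain ⟨f, hf0, hf1, hf01⟩ := exists_contMDiffMap_zero_one_of_isClosed
      (𝓘(ℝ, Eu (m+1))) (n := (⊤ : ℕ∞)) (isClosed_compl_iff.2 hOopen) isClosed_closure hdisj
    have hsupp : Function.support f ⊆ O := by
      intro x hx
      by_contra hxO
      exact hx (hf0 hxO)
    refine ⟨f, ?_, ?_, ?_, hf01, fun x hx => hf1 (subset_closure hx)⟩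
    · exact contMDiff_iff_contDiff.1 f.contMDiff
    · calc tsupport f ⊆ closure O := closure_mono hsupp
        _ ⊆ Wf i := hcOsub
    · have hts : tsupport f ⊆ closure O := closure_mono hsupp
      apply isCompact_of_isClosed_isBounded (isClosed_tsupport _)
      exact (Bornology.IsBounded.subset ((hWfbdd i).subset hcOsub) hts)
  choose gf hgfsmooth hgfsupp hgfcomp hgf01 hgfone using hbump
  obtain ⟨χf, hχsmooth, hχsupp, hχsum, hχflat⟩ := partition_pack gf hgfsmooth
  refine ⟨N+1, fun _ => N, fun j i => Wf i, χf, fun j i => hWfopen i,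
    fun j => hWfcover, fun j i => hWfstar i, ?_, ?_, ?_⟩
  · intro j i
    refine ⟨hχsmooth j i, ?_, (hχsupp j i).trans (hgfsupp i)⟩
    exact IsCompact.of_isClosed_subset (hgfcomp i) (isClosed_tsupport _) (hχsupp j i)
  · intro j
    refine ⟨⋃ i, v i, isOpen_iUnion hvopen, hvcover, ?_⟩
    intro x hx
    obtain ⟨i₀, hi₀⟩ := mem_iUnion.1 hx
    exact hχsum j x ⟨i₀, hgfone i₀ x hi₀⟩
  · intro x₀
    exact hχflat x₀

end
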